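/- Define the planar vector field G : (0,∞)² → ℝ² by G(x₁,x₂) = (a(1−x₁) − (q₁ + q₂x₂)x₁, c₁x₁/(1 + c₂x₂) − d·x₂). Then G has no nonconstant periodic orbit in (0,∞)²: there is no nonconstant differentiable γ : ℝ → (0,∞)² with γ'(t) = G(γ(t)) for all t and γ(t + T) = γ(t) for all t for some period T > 0. -/

import Mathlib

open Set Real

private lemma stmt13_aux0 (a q₁ c₁ d q₂ c₂ Q : ℝ)
    (ha : 0 < a) (hq₁ : 0 < q₁) (hc₁ : 0 < c₁) (hd : 0 < d)
    (hq₂ : 0 ≤ q₂) (hc₂ : 0 ≤ c₂)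
    (hQ : Q = c₁ * a / (d * (a + q₁)) + 1) :
    0 ≤ d * Q * (1 + c₂ * Q) * (a + q₁ + q₂ * Q) - c₁ * a := by
  have hQ0 : 0 < Q := by rw [hQ]; positivity
  have h1 : d * Q * (a + q₁) = c₁ * a + d * (a + q₁) := by
    rw [hQ]; field_simp
  have h2 : (1:ℝ) ≤ 1 + c₂ * Q := by nlinarith
  have h3 : a + q₁ ≤ a + q₁ + q₂ * Q := by nlinarith
  have h4 : (a + q₁) * 1 ≤ (1 + c₂ * Q) * (a + q₁ + q₂ * Q) := by
    nlinarith [mul_le_mul h2 h3 (by positivity) (by positivity)]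
  nlinarith [mul_le_mul_of_nonneg_left h4 (by positivity : (0:ℝ) ≤ d * Q)]

private lemma stmt13_aux1 (a q₁ c₁ d q₂ c₂ p q v x y : ℝ)
    (ha : 0 < a) (hq₁ : 0 < q₁) (hc₁ : 0 < c₁) (hd : 0 < d)
    (hq₂ : 0 ≤ q₂) (hc₂ : 0 ≤ c₂) (hp : 0 < p) (hq : 0 < q) (hv : 0 < v) :
    c₁^2*(-((a+q₁+q₂*v)*x^2) - q₂*p*(x*y)) +
      (c₁*(q₂*p)+d*(a+q₁))*(c₁*(x*y) - d*(1+c₂*(v+q))*y^2)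
      ≤ -((a+q₁)*c₁^2/2*x^2 + (a+q₁)*d^2/2*y^2) := by
  nlinarith [mul_nonneg (by positivity : (0:ℝ) ≤ a + q₁) (sq_nonneg (c₁*x - d*y)),
    mul_nonneg (mul_nonneg (by positivity : (0:ℝ) ≤ c₁^2*q₂) hv.le) (sq_nonneg x),
    mul_nonneg (by positivity : (0:ℝ) ≤ c₁*q₂*p*d) (sq_nonneg y),
    mul_nonneg (mul_nonneg (by positivity : (0:ℝ) ≤ (c₁*(q₂*p)+d*(a+q₁))*d*c₂)
      (by positivity : (0:ℝ) ≤ v+q)) (sq_nonneg y)]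

set_option maxHeartbeats 1000000 in
/-- the planar vector field
`G(x₁,x₂) = (a(1−x₁) − (q₁+q₂x₂)x₁, c₁x₁/(1+c₂x₂) − d x₂)` has no nonconstant
periodic orbit in `(0,∞)²`. -/
theorem stmt_13
    (a q₁ c₁ d q₂ c₂ : ℝ)
    (ha : 0 < a) (hq₁ : 0 < q₁) (hc₁ : 0 < c₁) (hd : 0 < d)
    (hq₂ : 0 ≤ q₂) (hc₂ : 0 ≤ c₂)
    (G : ℝ × ℝ → ℝ × ℝ)
    (hG : ∀ x : ℝ × ℝ, G x =
      (a * (1 - x.1) - (q₁ + q₂ * x.2) * x.1,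
       c₁ * x.1 / (1 + c₂ * x.2) - d * x.2)) :
    ¬ ∃ γ : ℝ → ℝ × ℝ,
      (∀ t, γ t ∈ Ioi (0:ℝ) ×ˢ Ioi (0:ℝ)) ∧
      (∀ t, HasDerivAt γ (G (γ t)) t) ∧
      (∃ T > (0:ℝ), ∀ t, γ (t + T) = γ t) ∧
      (∃ s t, γ s ≠ γ t) := by
  rintro ⟨γ, hmem, hder, ⟨T, hT, hper⟩, s₀, t₀, hne⟩
  -- the equilibrium: find q > 0 with d q (1+c₂q)(a+q₁+q₂q) = c₁ a
  have hQpos : (0:ℝ) < c₁ * a / (d * (a + q₁)) + 1 := by positivity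
  obtain ⟨q, hqmem, hqroot⟩ :
      ∃ q ∈ Icc (0:ℝ) (c₁ * a / (d * (a + q₁)) + 1),
        d * q * (1 + c₂ * q) * (a + q₁ + q₂ * q) - c₁ * a = 0 := by
    have hP0 : d * 0 * (1 + c₂ * 0) * (a + q₁ + q₂ * 0) - c₁ * a ≤ 0 := by
      nlinarith [mul_pos hc₁ ha]
    have hPQ := stmt13_aux0 a q₁ c₁ d q₂ c₂ _ ha hq₁ hc₁ hd hq₂ hc₂ rfl
    have hcont : ContinuousOn
        (fun y => d * y * (1 + c₂ * y) * (a + q₁ + q₂ * y) - c₁ * a)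
        (Icc 0 (c₁ * a / (d * (a + q₁)) + 1)) := by fun_prop
    have := intermediate_value_Icc (le_of_lt hQpos) hcont
    obtain ⟨q, hq, hq'⟩ := this ⟨hP0, hPQ⟩
    exact ⟨q, hq, hq'⟩
  have hq0 : 0 < q := by
    rcases lt_or_eq_of_le hqmem.1 with h | h
    · exact h
    · exfalso; rw [← h] at hqroot; nlinarith [mul_pos hc₁ ha]
  have hden : 0 < a + q₁ + q₂ * q := by positivity
  -- the equilibrium point p and identities
  obtain ⟨p, hp0, hE1, hE2⟩ :
      ∃ p : ℝ, 0 < p ∧ a = (a + q₁ + q₂ * q) * p ∧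
        c₁ * p = d * q * (1 + c₂ * q) := by
    refine ⟨a / (a + q₁ + q₂ * q), by positivity, by field_simp, ?_⟩
    rw [mul_div_assoc']
    rw [div_eq_iff (ne_of_gt hden)]
    linear_combination -hqroot
  -- components of γ
  have hu : ∀ t, HasDerivAt (fun s => (γ s).1)
      (a * (1 - (γ t).1) - (q₁ + q₂ * (γ t).2) * (γ t).1) t := by
    intro t
    have h := ((hder t).hasFDerivAt.fst).hasDerivAt
    have := hG (γ t)
    simpa [this] using h
  have hv : ∀ t, HasDerivAt (fun s => (γ s).2)
      (c₁ * (γ t).1 / (1 + c₂ * (γ t).2) - d * (γ t).2) t := by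
    intro t
    have h := ((hder t).hasFDerivAt.snd).hasDerivAt
    have := hG (γ t)
    simpa [this] using h
  have hu0 : ∀ t, 0 < (γ t).1 := fun t => (hmem t).1
  have hv0 : ∀ t, 0 < (γ t).2 := fun t => (hmem t).2
  have hne0 : ∀ t, (1 : ℝ) + c₂ * (γ t).2 ≠ 0 := by
    intro t; have := hv0 t; positivity
  -- Lyapunov function
  set W : ℝ → ℝ := fun s =>
    c₁ ^ 2 / 2 * ((γ s).1 - p) ^ 2 +
    (c₁*(q₂*p)+d*(a+q₁)) * ((1:ℝ)/2 * ((γ s).2) ^ 2 - q * ((γ s).2)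
      + c₂/3 * ((γ s).2) ^ 3 - c₂ * q / 2 * ((γ s).2) ^ 2) with hW
  set D : ℝ → ℝ := fun t =>
    c₁ ^ 2 * ((γ t).1 - p) * (a * (1 - (γ t).1) - (q₁ + q₂ * (γ t).2) * (γ t).1) +
    (c₁*(q₂*p)+d*(a+q₁)) * ((γ t).2 - q) *
      (c₁ * (γ t).1 - d * (γ t).2 * (1 + c₂ * (γ t).2)) with hD
  have hWder : ∀ t, HasDerivAt W (D t) t := by
    intro t
    have h1 : HasDerivAt (fun s => c₁ ^ 2 / 2 * ((γ s).1 - p) ^ 2)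
        (c₁ ^ 2 / 2 * ((2:ℕ) * ((γ t).1 - p) ^ (2-1) *
          (a * (1 - (γ t).1) - (q₁ + q₂ * (γ t).2) * (γ t).1))) t :=
      (((hu t).sub_const p).pow 2).const_mul (c₁ ^ 2 / 2)
    have hv' := hv t
    set g : ℝ := c₁ * (γ t).1 / (1 + c₂ * (γ t).2) - d * (γ t).2 with hg
    have h2 : HasDerivAt (fun s => (1:ℝ)/2 * ((γ s).2) ^ 2 - q * ((γ s).2)
        + c₂/3 * ((γ s).2) ^ 3 - c₂ * q / 2 * ((γ s).2) ^ 2)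
        (((1:ℝ)/2 * ((2:ℕ) * ((γ t).2) ^ (2-1) * g) - q * g)
          + c₂/3 * ((3:ℕ) * ((γ t).2) ^ (3-1) * g)
          - c₂ * q / 2 * ((2:ℕ) * ((γ t).2) ^ (2-1) * g)) t := by
      exact (((((hv').pow 2).const_mul ((1:ℝ)/2)).sub ((hv').const_mul q)).add
        (((hv').pow 3).const_mul (c₂/3))).sub (((hv').pow 2).const_mul (c₂ * q / 2))
    have h3 := h1.add (h2.const_mul (c₁*(q₂*p)+d*(a+q₁)))
    refine HasDerivAt.congr_deriv h3 ?_
    rw [hD, hg]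
    have hne := hne0 t
    have hne' : 1 + (γ t).2 * c₂ ≠ 0 := by rwa [mul_comm (γ t).2]
    field_simp
    ring
  -- the key inequality: D t ≤ - (positive quadratic)
  have hDle : ∀ t, D t ≤ -((a + q₁) * c₁ ^ 2 / 2 * ((γ t).1 - p) ^ 2
      + (a + q₁) * d ^ 2 / 2 * ((γ t).2 - q) ^ 2) := by
    intro t
    have hDt : D t = c₁^2*(-((a+q₁+q₂*(γ t).2)*((γ t).1-p)^2)
          - q₂*p*(((γ t).1-p)*((γ t).2-q)))
        + (c₁*(q₂*p)+d*(a+q₁))*(c₁*(((γ t).1-p)*((γ t).2-q))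
          - d*(1+c₂*((γ t).2+q))*((γ t).2-q)^2) := by
      simp only [hD]
      linear_combination c₁^2*((γ t).1-p)*hE1
        + (c₁*(q₂*p)+d*(a+q₁))*((γ t).2-q)*hE2
    rw [hDt]
    exact stmt13_aux1 a q₁ c₁ d q₂ c₂ p q ((γ t).2) ((γ t).1-p) ((γ t).2-q)
      ha hq₁ hc₁ hd hq₂ hc₂ hp0 hq0 (hv0 t)
  have hDnonpos : ∀ t, D t ≤ 0 := by
    intro t
    have h := hDle t
    have h3 : -((a + q₁) * c₁ ^ 2 / 2 * ((γ t).1 - p) ^ 2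
        + (a + q₁) * d ^ 2 / 2 * ((γ t).2 - q) ^ 2) ≤ 0 := by
      have h1 : 0 ≤ (a + q₁) * c₁ ^ 2 / 2 * ((γ t).1 - p) ^ 2 := by positivity
      have h2 : 0 ≤ (a + q₁) * d ^ 2 / 2 * ((γ t).2 - q) ^ 2 := by positivity
      linarith
    exact h.trans h3
  -- W is antitone
  have hWanti : Antitone W := by
    apply antitone_of_deriv_nonpos
    · intro t; exact (hWder t).differentiableAt
    · intro t; rw [(hWder t).deriv]; exact hDnonpos t
  -- W is constant, by periodicity
  have hWper : Function.Periodic W T := by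
    intro t; simp only [hW]; rw [hper t]
  have hWconst : ∀ t, W t = W 0 := by
    have key : ∀ s t : ℝ, W s ≤ W t := by
      intro s t
      obtain ⟨n, hn⟩ := exists_nat_gt ((t - s) / T)
      have hstep : t ≤ s + n * T := by
        have : (t - s) / T < n := hn
        rw [div_lt_iff₀ hT] at this
        nlinarith
      have := hWanti hstep
      have heq : W (s + n * T) = W s := by
        have := (hWper.nat_mul n) s
        simpa [add_comm] using this
      linarith [heq ▸ this]
    intro t; exact le_antisymm (key t 0) (key 0 t)
  -- hence D ≡ 0
  have hD0 : ∀ t, D t = 0 := by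
    intro t
    have hWc : W = fun _ => W 0 := funext hWconst
    have h0 : HasDerivAt W 0 t := by rw [hWc]; exact hasDerivAt_const t (W 0)
    exact (hWder t).unique h0
  -- hence γ is constant at (p, q)
  have hγconst : ∀ t, γ t = (p, q) := by
    intro t
    have h := hDle t
    rw [hD0 t] at h
    have hp1 : (0:ℝ) < (a + q₁) * c₁ ^ 2 / 2 := by positivity
    have hp2 : (0:ℝ) < (a + q₁) * d ^ 2 / 2 := by positivity
    have hx2 : ((γ t).1 - p) ^ 2 ≤ 0 := by
      nlinarith [sq_nonneg ((γ t).2 - q), sq_nonneg ((γ t).1 - p)]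
    have hy2 : ((γ t).2 - q) ^ 2 ≤ 0 := by
      nlinarith [sq_nonneg ((γ t).2 - q), sq_nonneg ((γ t).1 - p)]
    have h1 : (γ t).1 = p := by
      have h' := le_antisymm hx2 (sq_nonneg _)
      have h'' := pow_eq_zero_iff (n := 2) (by norm_num) |>.mp h'
      linarith [sub_eq_zero.mp h'']
    have h2 : (γ t).2 = q := by
      have h' := le_antisymm hy2 (sq_nonneg _)
      have h'' := pow_eq_zero_iff (n := 2) (by norm_num) |>.mp h'
      linarith [sub_eq_zero.mp h'']
    exact Prod.ext h1 h2
  exact hne ((hγconst s₀).trans (hγconst t₀).symm)
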